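/- Let λ : ℝ → ℝ be nondecreasing and nonnegative, n ≥ 1, and let 0 ≤ T₁ ≤ ... ≤ T_N ≤ t, with convention T_k = 0 for k ≤ 0. For any assignment c : {1,...,N} → {1,...,n} of failures to components, with L_i the last failure time of component i (L_i = 0 if none), the system intensity λ_s(t) = ∑_{i=1}^n λ(t - L_i) satisfies ∑_{i=0}^{n-1} λ(t - T_{N-i}) ≤ λ_s(t) ≤ (n-1)λ(t) + λ(t - T_N) when N ≥ 1. -/
import Mathlib


/-- Proposition 1 (combined form): lower and upper bounds on the rate of a
superimposed renewal process of `n` identical components with common nondecreasing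
failure rate `λ`, in terms of the masked system failure times only. -/
theorem stmt_3 (lam : ℝ → ℝ) (hlam : Monotone lam) (hpos : ∀ s, 0 ≤ lam s)
    (n : ℕ) (hn : 1 ≤ n)
    (T : ℤ → ℝ) (hT : Monotone T) (hT0 : ∀ k : ℤ, k ≤ 0 → T k = 0) (hT1 : 0 ≤ T 1)
    (N : ℕ) (hN : 1 ≤ N) (t : ℝ) (ht : T (N : ℤ) ≤ t)
    (c : ℤ → Fin n) (L : Fin n → ℝ)
    (hL : ∀ i : Fin n,
      L i = (((Finset.Icc (1 : ℤ) (N : ℤ)).filter (fun k => c k = i)).fold max 0 T)) :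
    ∑ i ∈ Finset.range n, lam (t - T ((N : ℤ) - (i : ℤ))) ≤ ∑ i : Fin n, lam (t - L i)
      ∧ ∑ i : Fin n, lam (t - L i) ≤ ((n : ℝ) - 1) * lam t + lam (t - T (N : ℤ)) := by
  classical
  -- T is nonnegative everywhere
  have hTnn : ∀ m : ℤ, 0 ≤ T m := by
    intro m
    rcases le_or_gt m 0 with h | h
    · rw [hT0 m h]
    · calc (0:ℝ) = T 0 := (hT0 0 le_rfl).symm
        _ ≤ T m := hT h.le
  -- L is nonnegative
  have hLnn : ∀ i : Fin n, 0 ≤ L i := by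
    intro i
    rw [hL i, Finset.le_fold_max]
    exact Or.inl le_rfl
  -- key counting bound: for any real x ≥ 0 and j : ℕ, the number of components with
  -- L i > T (N - j) is at most j.
  have hcount : ∀ j : ℕ,
      (Finset.univ.filter (fun i : Fin n => T ((N:ℤ) - j) < L i)).card ≤ j := by
    intro j
    set S := Finset.univ.filter (fun i : Fin n => T ((N:ℤ) - j) < L i) with hS
    have hex : ∀ i : Fin n, ∃ k : ℤ, i ∈ S →
        k ∈ Finset.Icc ((N:ℤ) - j + 1) N ∧ c k = i := by
      intro i
      by_cases hi : i ∈ S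
      · have hlt : T ((N:ℤ) - j) < L i := by
          have := Finset.mem_filter.mp hi
          exact this.2
        rw [hL i] at hlt
        have : ¬ ((Finset.Icc (1 : ℤ) (N : ℤ)).filter (fun k => c k = i)).fold max 0 T
            ≤ T ((N:ℤ) - j) := not_le.mpr hlt
        rw [Finset.fold_max_le] at this
        push_neg at this
        obtain ⟨k, hk, hkgt⟩ := this (hTnn _)
        have hk' := Finset.mem_filter.mp hk
        have hk'' := Finset.mem_Icc.mp hk'.1
        refine ⟨k, fun _ => ⟨Finset.mem_Icc.mpr ⟨?_, hk''.2⟩, hk'.2⟩⟩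
        by_contra hcon
        push_neg at hcon
        exact absurd (hT (by omega : k ≤ (N:ℤ) - j)) (not_le.mpr hkgt)
      · exact ⟨0, fun h => absurd h hi⟩
    choose φ hφ using hex
    have hinj : Set.InjOn φ S := by
      intro i₁ h₁ i₂ h₂ heq
      have e₁ := (hφ i₁ (Finset.mem_coe.mp h₁)).2
      have e₂ := (hφ i₂ (Finset.mem_coe.mp h₂)).2
      rw [heq] at e₁
      exact e₁.symm.trans e₂
    have hmaps : ∀ i ∈ S, φ i ∈ Finset.Icc ((N:ℤ) - j + 1) N :=
      fun i hi => (hφ i hi).1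
    have hcard := Finset.card_le_card_of_injOn φ hmaps hinj
    have : (Finset.Icc ((N:ℤ) - j + 1) N).card ≤ j := by
      rw [Int.card_Icc]
      omega
    omega
  constructor
  · -- lower bound
    set σ : Equiv.Perm (Fin n) := Tuple.sort L with hσ
    set π : Fin n ≃ Fin n := (Fin.revPerm).trans σ with hπ
    have hanti : ∀ j₁ j₂ : Fin n, j₁ ≤ j₂ → L (π j₂) ≤ L (π j₁) := by
      intro j₁ j₂ h
      have := Tuple.monotone_sort L (Fin.rev_le_rev.mpr h)
      simpa [hπ, Function.comp] using this
    have hkey : ∀ j : Fin n, L (π j) ≤ T ((N:ℤ) - (j:ℤ)) := by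
      intro j
      by_contra hcon
      push_neg at hcon
      have hsub : (Finset.Iic j).image π ⊆
          Finset.univ.filter (fun i : Fin n => T ((N:ℤ) - (j:ℕ)) < L i) := by
        intro i hi
        obtain ⟨m, hm, rfl⟩ := Finset.mem_image.mp hi
        refine Finset.mem_filter.mpr ⟨Finset.mem_univ _, lt_of_lt_of_le ?_
          (hanti m j (Finset.mem_Iic.mp hm))⟩
        exact_mod_cast hcon
      have hc1 : ((Finset.Iic j).image π).card = j + 1 := by
        rw [Finset.card_image_of_injective _ π.injective, Fin.card_Iic]
      have := Finset.card_le_card hsub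
      have := hcount (j : ℕ)
      omega
    rw [Finset.sum_range (fun i => lam (t - T ((N:ℤ) - i)))]
    calc ∑ j : Fin n, lam (t - T ((N:ℤ) - (j:ℤ)))
        ≤ ∑ j : Fin n, lam (t - L (π j)) := by
          apply Finset.sum_le_sum
          intro j _
          exact hlam (by linarith [hkey j])
      _ = ∑ i : Fin n, lam (t - L i) := Equiv.sum_comp π (fun i => lam (t - L i))
  · -- upper bound
    set i₀ : Fin n := c N with hi₀
    have hLN : T (N:ℤ) ≤ L i₀ := by
      rw [hL i₀, Finset.le_fold_max]
      refine Or.inr ⟨(N:ℤ), Finset.mem_filter.mpr ⟨Finset.mem_Icc.mpr ⟨by exact_mod_cast hN, le_rfl⟩, rfl⟩, le_rfl⟩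
    have hsplit : ∑ i : Fin n, lam (t - L i)
        = lam (t - L i₀) + ∑ i ∈ Finset.univ.erase i₀, lam (t - L i) :=
      (Finset.add_sum_erase _ _ (Finset.mem_univ i₀)).symm
    have hrest : ∑ i ∈ Finset.univ.erase i₀, lam (t - L i) ≤ ((n:ℝ) - 1) * lam t := by
      have hb : ∀ i ∈ Finset.univ.erase i₀, lam (t - L i) ≤ lam t :=
        fun i _ => hlam (by linarith [hLnn i])
      have := Finset.sum_le_card_nsmul _ _ _ hb
      have hcard : (Finset.univ.erase i₀).card = n - 1 := by
        rw [Finset.card_erase_of_mem (Finset.mem_univ i₀), Finset.card_univ, Fintype.card_fin]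
      rw [hcard] at this
      have hcast : ((n - 1 : ℕ) : ℝ) = (n:ℝ) - 1 := by
        push_cast [Nat.cast_sub hn]
        ring
      calc ∑ i ∈ Finset.univ.erase i₀, lam (t - L i) ≤ (n - 1 : ℕ) • lam t := this
        _ = ((n:ℝ) - 1) * lam t := by rw [nsmul_eq_mul, hcast]
    have hfirst : lam (t - L i₀) ≤ lam (t - T (N:ℤ)) := hlam (by linarith)
    rw [hsplit]
    linarith
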